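/- Existence criterion for nondegenerate spherical tetrahedra. Let l_{ab} ∈ [0,π] for 1 ≤ a < b ≤ 4. There exist linearly independent unit vectors u₁,…,u₄ ∈ ℝ⁴ with arccos⟨u_a,u_b⟩ = l_{ab} for all a < b if and only if: (i) each of the four faces (a,b,c) satisfies the spherical triangle conditions, namely the triangle inequalities among l_{ab}, l_{ac}, l_{bc} and l_{ab} + l_{ac} + l_{bc} ≤ 2π, and (ii) the determinant of the 4×4 Gram matrix (cos l_{ab}) (with ones on the diagonal) is strictly positive. -/

import Mathlib

open Real
open scoped RealInnerProductSpace

/-- Spherical triangle conditions for a triple of lengths: the triangle inequalities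
together with perimeter at most `2π`. -/
def SphericalTriangleCond (a b c : ℝ) : Prop :=
  a ≤ b + c ∧ b ≤ a + c ∧ c ≤ a + b ∧ a + b + c ≤ 2 * π

lemma gram3_factor (a b c : ℝ) :
    1 - cos a ^ 2 - cos b ^ 2 - cos c ^ 2 + 2 * (cos a * cos b * cos c)
      = (cos (b - c) - cos a) * (cos a - cos (b + c)) := by
  rw [Real.cos_sub, Real.cos_add]
  nlinarith [Real.sin_sq_add_cos_sq b, Real.sin_sq_add_cos_sq c]

lemma tri_iff {a b c : ℝ} (ha : a ∈ Set.Icc 0 π) (hb : b ∈ Set.Icc 0 π)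
    (hc : c ∈ Set.Icc 0 π) :
    SphericalTriangleCond a b c ↔
      0 ≤ 1 - cos a ^ 2 - cos b ^ 2 - cos c ^ 2 + 2 * (cos a * cos b * cos c) := by
  obtain ⟨ha0, haπ⟩ := ha
  obtain ⟨hb0, hbπ⟩ := hb
  obtain ⟨hc0, hcπ⟩ := hc
  rw [gram3_factor]
  constructor
  · rintro ⟨h1, h2, h3, h4⟩
    apply mul_nonneg
    · have habs : |b - c| ≤ a := abs_le.2 ⟨by linarith, by linarith⟩
      have := Real.cos_le_cos_of_nonneg_of_le_pi (abs_nonneg (b - c)) haπ habs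
      rw [Real.cos_abs] at this
      linarith
    · rcases le_or_gt (b + c) π with h | h
      · have := Real.cos_le_cos_of_nonneg_of_le_pi ha0 h h1
        linarith
      · have h5 : a ≤ 2 * π - (b + c) := by linarith
        have := Real.cos_le_cos_of_nonneg_of_le_pi ha0 (by linarith) h5
        rw [Real.cos_two_pi_sub] at this
        linarith
  · intro hprod
    have habsπ : |b - c| ≤ π := abs_le.2 ⟨by linarith, by linarith⟩
    rcases mul_nonneg_iff.1 hprod with ⟨hf1, hf2⟩ | ⟨hf1, hf2⟩
    · have h1 : |b - c| ≤ a := by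
        have : cos a ≤ cos |b - c| := by rw [Real.cos_abs]; linarith
        exact (Real.strictAntiOn_cos.le_iff_ge ⟨ha0, haπ⟩ ⟨abs_nonneg _, habsπ⟩).1 this
      have h1' := abs_le.1 h1
      rcases le_or_gt (b + c) π with h | h
      · have h2 : a ≤ b + c :=
          (Real.strictAntiOn_cos.le_iff_ge ⟨by linarith, h⟩ ⟨ha0, haπ⟩).1 (by linarith)
        exact ⟨h2, by linarith, by linarith, by linarith⟩
      · have h2 : a ≤ 2 * π - (b + c) := by
          have hc2 : cos (2 * π - (b + c)) ≤ cos a := by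
            rw [Real.cos_two_pi_sub]; linarith
          exact (Real.strictAntiOn_cos.le_iff_ge ⟨by linarith, by linarith⟩ ⟨ha0, haπ⟩).1 hc2
        exact ⟨by linarith, by linarith, by linarith, by linarith⟩
    · have h1 : a ≤ |b - c| := by
        have : cos |b - c| ≤ cos a := by rw [Real.cos_abs]; linarith
        exact (Real.strictAntiOn_cos.le_iff_ge ⟨abs_nonneg _, habsπ⟩ ⟨ha0, haπ⟩).1 this
      rcases le_or_gt (b + c) π with h | h
      · have h2 : b + c ≤ a :=
          (Real.strictAntiOn_cos.le_iff_ge ⟨ha0, haπ⟩ ⟨by linarith, h⟩).1 (by linarith)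
        rcases abs_cases (b - c) with ⟨he, _⟩ | ⟨he, _⟩ <;> rw [he] at h1 <;>
          exact ⟨by linarith, by linarith, by linarith, by linarith⟩
      · have h2 : 2 * π - (b + c) ≤ a := by
          have hc2 : cos a ≤ cos (2 * π - (b + c)) := by
            rw [Real.cos_two_pi_sub]; linarith
          exact (Real.strictAntiOn_cos.le_iff_ge ⟨ha0, haπ⟩ ⟨by linarith, by linarith⟩).1 hc2
        rcases abs_cases (b - c) with ⟨he, _⟩ | ⟨he, _⟩ <;> rw [he] at h1 <;>
          exact ⟨by linarith, by linarith, by linarith, by linarith⟩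

lemma det3_eq (x y z : ℝ) :
    Matrix.det !![1, x, y; x, 1, z; y, z, 1]
      = 1 - x ^ 2 - y ^ 2 - z ^ 2 + 2 * (x * y * z) := by
  simp [Matrix.det_fin_three]; ring

lemma det4_expand (d1 d2 d3 d4 p q r s u v : ℝ) :
    Matrix.det !![d1, p, q, r; p, d2, s, u; q, s, d3, v; r, u, v, d4]
      = d1 * (d2 * (d3 * d4 - v * v) - s * (s * d4 - v * u) + u * (s * v - d3 * u))
        - p * (p * (d3 * d4 - v * v) - s * (q * d4 - v * r) + u * (q * v - d3 * r))
        + q * (p * (s * d4 - v * u) - d2 * (q * d4 - v * r) + u * (q * u - s * r))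
        - r * (p * (s * v - d3 * u) - d2 * (q * v - d3 * r) + s * (q * u - s * r)) := by
  rw [Matrix.det_succ_row_zero]
  simp [Fin.sum_univ_succ, Matrix.det_fin_three, Fin.succAbove]
  ring

lemma det4_shift (t p q r s u v : ℝ) :
    Matrix.det !![1 + t, p, q, r; p, 1 + t, s, u; q, s, 1 + t, v; r, u, v, 1 + t]
      = t ^ 4 + 4 * t ^ 3
        + ((1 - p ^ 2) + (1 - q ^ 2) + (1 - r ^ 2) + (1 - s ^ 2) + (1 - u ^ 2) + (1 - v ^ 2))
          * t ^ 2
        + ((1 - p ^ 2 - q ^ 2 - s ^ 2 + 2 * (p * q * s))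
            + (1 - p ^ 2 - r ^ 2 - u ^ 2 + 2 * (p * r * u))
            + (1 - q ^ 2 - r ^ 2 - v ^ 2 + 2 * (q * r * v))
            + (1 - s ^ 2 - u ^ 2 - v ^ 2 + 2 * (s * u * v))) * t
        + Matrix.det !![1, p, q, r; p, 1, s, u; q, s, 1, v; r, u, v, 1] := by
  rw [det4_expand, det4_expand]; ring

lemma psd_det_nonneg {n : ℕ} {A : Matrix (Fin n) (Fin n) ℝ} (hA : A.PosSemidef) :
    0 ≤ A.det := by
  rw [hA.1.det_eq_prod_eigenvalues]
  exact Finset.prod_nonneg fun i _ => by simpa using hA.eigenvalues_nonneg i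

lemma gram_posdef {n : ℕ} (u : Fin n → EuclideanSpace ℝ (Fin n))
    (hu : LinearIndependent ℝ u) :
    (Matrix.of fun a b => (⟪u a, u b⟫ : ℝ)).PosDef := by
  refine Matrix.PosDef.of_dotProduct_mulVec_pos ?_ ?_
  · ext a b
    simp only [Matrix.conjTranspose_apply, Matrix.of_apply, star_trivial]
    exact real_inner_comm _ _
  · intro x hx
    have key : dotProduct (star x) ((Matrix.of fun a b => (⟪u a, u b⟫ : ℝ)).mulVec x)
        = ⟪∑ a, x a • u a, ∑ b, x b • u b⟫ := by
      simp only [star_trivial, dotProduct, Matrix.mulVec, Matrix.of_apply,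
        sum_inner, inner_sum, real_inner_smul_left, real_inner_smul_right]
      simp [dotProduct, Finset.mul_sum, mul_comm, mul_assoc, mul_left_comm]
      exact Finset.sum_congr rfl fun a _ => Finset.sum_congr rfl fun b _ => by rw [real_inner_comm]
    have hw : (∑ a, x a • u a) ≠ 0 := fun hw =>
      hx (funext fun i => (Fintype.linearIndependent_iff.1 hu) x hw i)
    rw [key, real_inner_self_eq_norm_sq]
    exact pow_pos (norm_pos_iff.2 hw) 2

open scoped MatrixOrder in
lemma construct {M : Matrix (Fin 4) (Fin 4) ℝ} (hH : M.IsHermitian)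
    (hpos : ∀ t : ℝ, 0 ≤ t → 0 < (M + t • 1).det) :
    ∃ u : Fin 4 → EuclideanSpace ℝ (Fin 4),
      LinearIndependent ℝ u ∧ ∀ a b, ⟪u a, u b⟫ = M a b := by
  have hev : ∀ i, 0 ≤ hH.eigenvalues i := by
    intro i
    by_contra hneg
    push_neg at hneg
    set lam := hH.eigenvalues i with hlam
    have hv := hH.mulVec_eigenvectorBasis i
    have hvne : ⇑(hH.eigenvectorBasis i) ≠ 0 := by
      intro h0
      exact hH.eigenvectorBasis.orthonormal.ne_zero i (by ext k; exact congrFun h0 k)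
    have hker : (M + (-lam) • 1).mulVec ⇑(hH.eigenvectorBasis i) = 0 := by
      rw [Matrix.add_mulVec, hv, Matrix.smul_mulVec, Matrix.one_mulVec]
      module
    have hdet : (M + (-lam) • 1).det = 0 :=
      Matrix.exists_mulVec_eq_zero_iff.1 ⟨_, hvne, hker⟩
    exact absurd hdet (ne_of_gt (hpos (-lam) (by linarith)))
  have hpsd : M.PosSemidef := hH.posSemidef_iff_eigenvalues_nonneg.2 hev
  set S := CFC.sqrt M with hS
  have hSS : S * S = M := CFC.sqrt_mul_sqrt_self M hpsd.nonneg
  have hSH : S.IsHermitian := (Matrix.nonneg_iff_posSemidef.1 (CFC.sqrt_nonneg M)).1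
  have hSsym : ∀ i j, S i j = S j i := by
    intro i j
    conv_lhs => rw [← hSH]
    simp [Matrix.conjTranspose_apply]
  have hdetM : 0 < M.det := by simpa using hpos 0 le_rfl
  have hdetS : S.det ≠ 0 := by
    intro h0
    rw [← hSS, Matrix.det_mul, h0, mul_zero] at hdetM
    exact lt_irrefl _ hdetM
  refine ⟨fun a => (WithLp.equiv 2 (Fin 4 → ℝ)).symm (S a), ?_, ?_⟩
  · rw [Fintype.linearIndependent_iff]
    intro g hg
    have hvm : Matrix.vecMul g S = 0 := by
      funext i
      have := congrArg (· i) hg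
      simpa [Matrix.vecMul, dotProduct] using this
    by_contra hne
    push_neg at hne
    obtain ⟨i0, hi0⟩ := hne
    have : g ≠ 0 := fun h => hi0 (congrFun h i0)
    exact hdetS (Matrix.exists_vecMul_eq_zero_iff.1 ⟨g, this, hvm⟩)
  · intro a b
    have : (⟪(WithLp.equiv 2 (Fin 4 → ℝ)).symm (S a),
        (WithLp.equiv 2 (Fin 4 → ℝ)).symm (S b)⟫ : ℝ) = ∑ k, S a k * S b k := by
      simp [PiLp.inner_apply, RCLike.inner_apply]
      exact Finset.sum_congr rfl fun k _ => mul_comm _ _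
    rw [this, ← hSS, Matrix.mul_apply]
    exact Finset.sum_congr rfl fun k _ => by rw [hSsym k b]

lemma norm_eq_one_of_inner_self {E : Type*} [NormedAddCommGroup E] [InnerProductSpace ℝ E]
    {x : E} (hx : ⟪x, x⟫ = (1 : ℝ)) : ‖x‖ = 1 := by
  have h : ‖x‖ ^ 2 = 1 := by rw [← real_inner_self_eq_norm_sq, hx]
  rw [← Real.sqrt_one, ← h, pow_two, Real.sqrt_mul_self (norm_nonneg x)]


/-- **Existence criterion for nondegenerate spherical tetrahedra.** For
`l_{ab} ∈ [0, π]`, there exist linearly independent unit vectors `u₁, …, u₄ ∈ ℝ⁴` with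
geodesic distances `arccos⟨u_a, u_b⟩ = l_{ab}` if and only if each of the four faces
satisfies the spherical triangle conditions and the `4 × 4` Gram determinant
`det(cos l_{ab})` is strictly positive. -/
theorem spherical_tetrahedron_exists_iff (l12 l13 l14 l23 l24 l34 : ℝ)
    (h12 : l12 ∈ Set.Icc 0 π) (h13 : l13 ∈ Set.Icc 0 π) (h14 : l14 ∈ Set.Icc 0 π)
    (h23 : l23 ∈ Set.Icc 0 π) (h24 : l24 ∈ Set.Icc 0 π) (h34 : l34 ∈ Set.Icc 0 π) :
    (∃ u : Fin 4 → EuclideanSpace ℝ (Fin 4),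
      LinearIndependent ℝ u ∧ (∀ i, ‖u i‖ = 1) ∧
      Real.arccos ⟪u 0, u 1⟫ = l12 ∧ Real.arccos ⟪u 0, u 2⟫ = l13 ∧
      Real.arccos ⟪u 0, u 3⟫ = l14 ∧ Real.arccos ⟪u 1, u 2⟫ = l23 ∧
      Real.arccos ⟪u 1, u 3⟫ = l24 ∧ Real.arccos ⟪u 2, u 3⟫ = l34) ↔
    (SphericalTriangleCond l12 l13 l23 ∧ SphericalTriangleCond l12 l14 l24 ∧
     SphericalTriangleCond l13 l14 l34 ∧ SphericalTriangleCond l23 l24 l34 ∧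
     0 < Matrix.det !![1, Real.cos l12, Real.cos l13, Real.cos l14;
                       Real.cos l12, 1, Real.cos l23, Real.cos l24;
                       Real.cos l13, Real.cos l23, 1, Real.cos l34;
                       Real.cos l14, Real.cos l24, Real.cos l34, 1]) := by
  constructor
  · rintro ⟨u, hu, hnorm, e12, e13, e14, e23, e24, e34⟩
    have hb : ∀ a b : Fin 4, -1 ≤ (⟪u a, u b⟫ : ℝ) ∧ (⟪u a, u b⟫ : ℝ) ≤ 1 := by
      intro a b
      have := abs_real_inner_le_norm (u a) (u b)
      rw [hnorm a, hnorm b, one_mul] at this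
      exact abs_le.1 this
    have hone : ∀ k, (⟪u k, u k⟫ : ℝ) = 1 := fun k => by
      rw [real_inner_self_eq_norm_sq, hnorm k, one_pow]
    have f01 : (⟪u 0, u 1⟫ : ℝ) = cos l12 := by
      rw [← e12, Real.cos_arccos (hb 0 1).1 (hb 0 1).2]
    have f02 : (⟪u 0, u 2⟫ : ℝ) = cos l13 := by
      rw [← e13, Real.cos_arccos (hb 0 2).1 (hb 0 2).2]
    have f03 : (⟪u 0, u 3⟫ : ℝ) = cos l14 := by
      rw [← e14, Real.cos_arccos (hb 0 3).1 (hb 0 3).2]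
    have f12 : (⟪u 1, u 2⟫ : ℝ) = cos l23 := by
      rw [← e23, Real.cos_arccos (hb 1 2).1 (hb 1 2).2]
    have f13 : (⟪u 1, u 3⟫ : ℝ) = cos l24 := by
      rw [← e24, Real.cos_arccos (hb 1 3).1 (hb 1 3).2]
    have f23 : (⟪u 2, u 3⟫ : ℝ) = cos l34 := by
      rw [← e34, Real.cos_arccos (hb 2 3).1 (hb 2 3).2]
    have f10 : (⟪u 1, u 0⟫ : ℝ) = cos l12 := by rw [real_inner_comm]; exact f01
    have f20 : (⟪u 2, u 0⟫ : ℝ) = cos l13 := by rw [real_inner_comm]; exact f02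
    have f30 : (⟪u 3, u 0⟫ : ℝ) = cos l14 := by rw [real_inner_comm]; exact f03
    have f21 : (⟪u 2, u 1⟫ : ℝ) = cos l23 := by rw [real_inner_comm]; exact f12
    have f31 : (⟪u 3, u 1⟫ : ℝ) = cos l24 := by rw [real_inner_comm]; exact f13
    have f32 : (⟪u 3, u 2⟫ : ℝ) = cos l34 := by rw [real_inner_comm]; exact f23
    have hPD := gram_posdef u hu
    have hGM : (!![1, Real.cos l12, Real.cos l13, Real.cos l14;
                       Real.cos l12, 1, Real.cos l23, Real.cos l24;
                       Real.cos l13, Real.cos l23, 1, Real.cos l34;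
                       Real.cos l14, Real.cos l24, Real.cos l34, 1] :
        Matrix (Fin 4) (Fin 4) ℝ) = Matrix.of fun a b => (⟪u a, u b⟫ : ℝ) := by
      ext a b
      fin_cases a <;> fin_cases b <;>
        simp [-PiLp.inner_apply, f01, f02, f03, f12, f13, f23, f10, f20, f30, f21, f31, f32, hone, hnorm]
    have hPSD := hPD.posSemidef
    have hface : ∀ f : Fin 3 → Fin 4,
        0 ≤ ((Matrix.of fun a b => (⟪u a, u b⟫ : ℝ)).submatrix f f).det :=
      fun f => psd_det_nonneg (hPSD.submatrix f)
    have face1 : ((Matrix.of fun a b => (⟪u a, u b⟫ : ℝ)).submatrix ![0,1,2] ![0,1,2])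
        = !![1, cos l12, cos l13; cos l12, 1, cos l23; cos l13, cos l23, 1] := by
      ext i j
      fin_cases i <;> fin_cases j <;>
        simp [-PiLp.inner_apply, f01, f02, f03, f12, f13, f23, f10, f20, f30, f21, f31, f32, hone, hnorm]
    have face2 : ((Matrix.of fun a b => (⟪u a, u b⟫ : ℝ)).submatrix ![0,1,3] ![0,1,3])
        = !![1, cos l12, cos l14; cos l12, 1, cos l24; cos l14, cos l24, 1] := by
      ext i j
      fin_cases i <;> fin_cases j <;>
        simp [-PiLp.inner_apply, f01, f02, f03, f12, f13, f23, f10, f20, f30, f21, f31, f32, hone, hnorm]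
    have face3 : ((Matrix.of fun a b => (⟪u a, u b⟫ : ℝ)).submatrix ![0,2,3] ![0,2,3])
        = !![1, cos l13, cos l14; cos l13, 1, cos l34; cos l14, cos l34, 1] := by
      ext i j
      fin_cases i <;> fin_cases j <;>
        simp [-PiLp.inner_apply, f01, f02, f03, f12, f13, f23, f10, f20, f30, f21, f31, f32, hone, hnorm]
    have face4 : ((Matrix.of fun a b => (⟪u a, u b⟫ : ℝ)).submatrix ![1,2,3] ![1,2,3])
        = !![1, cos l23, cos l24; cos l23, 1, cos l34; cos l24, cos l34, 1] := by
      ext i j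
      fin_cases i <;> fin_cases j <;>
        simp [-PiLp.inner_apply, f01, f02, f03, f12, f13, f23, f10, f20, f30, f21, f31, f32, hone, hnorm]
    refine ⟨?_, ?_, ?_, ?_, ?_⟩
    · refine (tri_iff h12 h13 h23).2 ?_
      have := hface ![0,1,2]; rw [face1, det3_eq] at this; exact this
    · refine (tri_iff h12 h14 h24).2 ?_
      have := hface ![0,1,3]; rw [face2, det3_eq] at this; exact this
    · refine (tri_iff h13 h14 h34).2 ?_
      have := hface ![0,2,3]; rw [face3, det3_eq] at this; exact this
    · refine (tri_iff h23 h24 h34).2 ?_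
      have := hface ![1,2,3]; rw [face4, det3_eq] at this; exact this
    · rw [hGM]; exact hPD.det_pos
  · rintro ⟨t1, t2, t3, t4, hdet⟩
    set M : Matrix (Fin 4) (Fin 4) ℝ :=
      !![1, Real.cos l12, Real.cos l13, Real.cos l14;
         Real.cos l12, 1, Real.cos l23, Real.cos l24;
         Real.cos l13, Real.cos l23, 1, Real.cos l34;
         Real.cos l14, Real.cos l24, Real.cos l34, 1] with hM
    have hH : M.IsHermitian := by
      ext i j
      fin_cases i <;> fin_cases j <;> simp [hM, Matrix.conjTranspose_apply]
    have hsq : ∀ x : ℝ, 0 ≤ 1 - cos x ^ 2 := by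
      intro x
      nlinarith [Real.neg_one_le_cos x, Real.cos_le_one x]
    have ht1' := (tri_iff h12 h13 h23).1 t1
    have ht2' := (tri_iff h12 h14 h24).1 t2
    have ht3' := (tri_iff h13 h14 h34).1 t3
    have ht4' := (tri_iff h23 h24 h34).1 t4
    have hpos : ∀ t : ℝ, 0 ≤ t → 0 < (M + t • 1).det := by
      intro t ht
      have hMt : M + t • 1
          = !![1 + t, Real.cos l12, Real.cos l13, Real.cos l14;
               Real.cos l12, 1 + t, Real.cos l23, Real.cos l24;
               Real.cos l13, Real.cos l23, 1 + t, Real.cos l34;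
               Real.cos l14, Real.cos l24, Real.cos l34, 1 + t] := by
        ext i j
        fin_cases i <;> fin_cases j <;>
          simp [hM, Matrix.one_apply, add_comm]
      rw [hMt, det4_shift]
      have e4 : (0:ℝ) ≤ t ^ 4 := by positivity
      have e3 : (0:ℝ) ≤ 4 * t ^ 3 := by positivity
      have e2 : (0:ℝ) ≤ ((1 - cos l12 ^ 2) + (1 - cos l13 ^ 2) + (1 - cos l14 ^ 2)
          + (1 - cos l23 ^ 2) + (1 - cos l24 ^ 2) + (1 - cos l34 ^ 2)) * t ^ 2 := by
        have := hsq l12; have := hsq l13; have := hsq l14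
        have := hsq l23; have := hsq l24; have := hsq l34
        have h2 : (0:ℝ) ≤ t ^ 2 := sq_nonneg t
        nlinarith
      have e1 : (0:ℝ) ≤ ((1 - cos l12 ^ 2 - cos l13 ^ 2 - cos l23 ^ 2
            + 2 * (cos l12 * cos l13 * cos l23))
          + (1 - cos l12 ^ 2 - cos l14 ^ 2 - cos l24 ^ 2
            + 2 * (cos l12 * cos l14 * cos l24))
          + (1 - cos l13 ^ 2 - cos l14 ^ 2 - cos l34 ^ 2
            + 2 * (cos l13 * cos l14 * cos l34))
          + (1 - cos l23 ^ 2 - cos l24 ^ 2 - cos l34 ^ 2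
            + 2 * (cos l23 * cos l24 * cos l34))) * t :=
        mul_nonneg (by linarith) ht
      linarith [hdet]
    obtain ⟨u, hu, hin⟩ := construct hH hpos
    have hnorm : ∀ i, ‖u i‖ = 1 := by
      intro i
      apply norm_eq_one_of_inner_self
      rw [hin i i]
      fin_cases i <;> simp [hM]
    refine ⟨u, hu, hnorm, ?_, ?_, ?_, ?_, ?_, ?_⟩
    · rw [hin 0 1, show M 0 1 = cos l12 by simp [hM]]
      exact Real.arccos_cos h12.1 h12.2
    · rw [hin 0 2, show M 0 2 = cos l13 by simp [hM]]
      exact Real.arccos_cos h13.1 h13.2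
    · rw [hin 0 3, show M 0 3 = cos l14 by simp [hM]]
      exact Real.arccos_cos h14.1 h14.2
    · rw [hin 1 2, show M 1 2 = cos l23 by simp [hM]]
      exact Real.arccos_cos h23.1 h23.2
    · rw [hin 1 3, show M 1 3 = cos l24 by simp [hM]]
      exact Real.arccos_cos h24.1 h24.2
    · rw [hin 2 3, show M 2 3 = cos l34 by simp [hM]]
      exact Real.arccos_cos h34.1 h34.2
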